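/- Let A₀ be an invertible 3×3 real matrix with (A₀)₂₁ = (A₀)₃₁ = 0. Then the 3×3 real matrix whose first row is the first row of (A₀⁻¹)ᵀ, whose second row is (1, 0, 0), and whose third row is (0, 1, 0), has rank exactly 2. In particular, the rank condition 'rank equal to 3' of Theorem 6 of Rubio-Ramírez, Waggoner, and Zha (2010) fails at j = 2 for the counterexample restrictions. -/

import Mathlib

open Matrix

/-- For an invertible 3×3 real matrix `A₀` with `(A₀)₂₁ = (A₀)₃₁ = 0`,
the matrix whose first row is the first row of `(A₀⁻¹)ᵀ`, second row `(1,0,0)`, and third row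
`(0,1,0)` has rank exactly 2 (the rank condition `rank = 3` of Theorem 6 of RWZ fails at
`j = 2`). -/
theorem rank_condition_fails
    (A₀ : Matrix (Fin 3) (Fin 3) ℝ) (hA : IsUnit A₀.det)
    (h21 : A₀ 1 0 = 0) (h31 : A₀ 2 0 = 0) :
    (Matrix.of ![(A₀⁻¹)ᵀ 0, ![1, 0, 0], ![0, 1, 0]]).rank = 2 := by
  have hd : A₀.det ≠ 0 := hA.ne_zero
  have ha : A₀ 0 0 ≠ 0 := by
    intro h
    apply hd
    rw [Matrix.det_fin_three]
    simp [h, h21, h31]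
  have hinv := Matrix.nonsing_inv_mul A₀ hA
  have key : ∀ j : Fin 3, A₀⁻¹ j 0 * A₀ 0 0 = if j = 0 then 1 else 0 := by
    intro j
    have := congrFun (congrFun hinv j) 0
    simpa [Matrix.mul_apply, Fin.sum_univ_three, h21, h31, Matrix.one_apply] using this
  have h10 : A₀⁻¹ 1 0 = 0 := by
    have := key 1
    simp at this
    rcases this with h | h
    · exact h
    · exact absurd h ha
  have h20 : A₀⁻¹ 2 0 = 0 := by
    have := key 2
    simp at this
    rcases this with h | h
    · exact h
    · exact absurd h ha
  set c : ℝ := A₀⁻¹ 0 0 with hc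
  have hM : (Matrix.of ![(A₀⁻¹)ᵀ 0, ![1, 0, 0], ![0, 1, 0]]) =
      (Matrix.of ![![c, 0, 1], ![1, 0, 0], ![0, 1, 0]]) *
        Matrix.diagonal ![(1 : ℝ), 1, 0] := by
    ext i j
    fin_cases i <;> fin_cases j <;>
      simp [Matrix.mul_apply, Fin.sum_univ_three, Matrix.diagonal, h10, h20, Matrix.vecHead, Matrix.vecTail, ← hc]
  rw [hM]
  rw [Matrix.rank_mul_eq_right_of_isUnit_det]
  · rw [Matrix.rank_diagonal]
    rw [Fintype.card_subtype]
    have : Finset.filter (fun i : Fin 3 => ![(1 : ℝ), 1, 0] i ≠ 0) Finset.univ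
        = {0, 1} := by
      ext i
      fin_cases i <;> simp
    rw [this]
    decide
  · rw [Matrix.det_fin_three]
    simp
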